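/- Every stream generated by a stationary policy of a finite Markov decision process is asymptotically periodic: if S ≥ 1, Q is an S×S row-stochastic matrix, R ∈ ℝ^S, s ∈ {1,…,S}, and u_t = (Q^{t−1}·R)_s for all t ≥ 1, then there exist a real λ > 0, an eventually periodic sequence w, and a sequence Δ with lim_{t→∞} e^{λt} Δ_t = 0, such that u = w + Δ. -/

import Mathlib

open Filter Finset Topology

/-- A bounded real sequence (an element of 𝒰). Index `t : ℕ` represents time `t+1`. -/
def Bdd (u : ℕ → ℝ) : Prop := ∃ C : ℝ, ∀ t, |u t| ≤ C

/-- Partial sum `∑_{t=1}^n u_t`. -/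
noncomputable def psum (u : ℕ → ℝ) (n : ℕ) : ℝ := ∑ t ∈ Finset.range n, u t

/-- Cesàro average `(1/n) ∑_{T=1}^n ∑_{t=1}^T u_t`. -/
noncomputable def cesaroAvg (u : ℕ → ℝ) (n : ℕ) : ℝ :=
  (∑ T ∈ Finset.range n, psum u (T + 1)) / n

/-- The series `∑ u_t` is Cesàro-summable. -/
def CesaroSummable (u : ℕ → ℝ) : Prop :=
  ∃ L : ℝ, Filter.Tendsto (cesaroAvg u) Filter.atTop (nhds L)

/-- The series `∑ u_t` has bounded partial sums. -/
def BddPartialSums (u : ℕ → ℝ) : Prop := ∃ C : ℝ, ∀ n, |psum u n| ≤ C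

/-- The long-run average of `u` exists and equals `a`. -/
def AvgTo (u : ℕ → ℝ) (a : ℝ) : Prop :=
  Filter.Tendsto (fun n : ℕ => psum u n / n) Filter.atTop (nhds a)

/-- The sequence `(c, u_1, u_2, …)`. -/
def cons (c : ℝ) (u : ℕ → ℝ) : ℕ → ℝ := fun t => if t = 0 then c else u (t - 1)

/-- The discounted sum `∑_{t=1}^∞ β^t d_t`. -/
noncomputable def discSum (d : ℕ → ℝ) (β : ℝ) : ℝ := ∑' t : ℕ, β ^ (t + 1) * d t

/-- The Blackwell relation `u ≿_B v`. -/
def BlackwellGE (u v : ℕ → ℝ) : Prop :=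
  0 ≤ Filter.liminf (fun β => discSum (u - v) β) (nhdsWithin 1 (Set.Iio 1))

/-- Veinott's average overtaking relation `u ≿_V v`. -/
def VeinottGE (u v : ℕ → ℝ) : Prop :=
  0 ≤ Filter.liminf (cesaroAvg (u - v)) Filter.atTop

/-- Reflexivity of the preference relation on 𝒰. -/
def ReflOn (R : (ℕ → ℝ) → (ℕ → ℝ) → Prop) : Prop := ∀ u, Bdd u → R u u

/-- Transitivity of the preference relation on 𝒰. -/
def TransOn (R : (ℕ → ℝ) → (ℕ → ℝ) → Prop) : Prop :=
  ∀ u v w, Bdd u → Bdd v → Bdd w → R u v → R v w → R u w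

/-- Strict preference `u ≻ v`. -/
def StrictPref (R : (ℕ → ℝ) → (ℕ → ℝ) → Prop) (u v : ℕ → ℝ) : Prop := R u v ∧ ¬ R v u

/-- Axiom A1: `u > v` implies `u ≻ v`. -/
def AxiomA1 (R : (ℕ → ℝ) → (ℕ → ℝ) → Prop) : Prop :=
  ∀ u v, Bdd u → Bdd v → (∀ t, v t ≤ u t) → (∃ t, v t < u t) → StrictPref R u v

/-- Axiom A2: `u ≿ v` implies `u + α ≿ v + α`. -/
def AxiomA2 (R : (ℕ → ℝ) → (ℕ → ℝ) → Prop) : Prop :=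
  ∀ u v α, Bdd u → Bdd v → Bdd α → R u v → R (u + α) (v + α)

/-- Axiom A3: if the long-run average `ū` exists then `(ū, u) ∼ u`. -/
def AxiomA3 (R : (ℕ → ℝ) → (ℕ → ℝ) → Prop) : Prop :=
  ∀ u a, Bdd u → AvgTo u a → (R (cons a u) u ∧ R u (cons a u))

/-- `w` is eventually periodic with period `p` from time `T` onward. -/
def EvPeriodicFrom (w : ℕ → ℝ) (p T : ℕ) : Prop := 1 ≤ p ∧ ∀ t, T ≤ t → w (t + p) = w t

/-- `w` is eventually periodic. -/
def EvPeriodic (w : ℕ → ℝ) : Prop := ∃ p T : ℕ, EvPeriodicFrom w p T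

/-- The set 𝒰₊: bounded streams of the form `w + Δ`, `w` eventually periodic and
`∑ Δ_t` Cesàro-summable with bounded partial sums. -/
def UPlus (u : ℕ → ℝ) : Prop :=
  Bdd u ∧ ∃ w Δ : ℕ → ℝ, u = w + Δ ∧ EvPeriodic w ∧ CesaroSummable Δ ∧ BddPartialSums Δ

/-- An `S × S` row-stochastic matrix. -/
def RowStochastic {S : ℕ} (Q : Matrix (Fin S) (Fin S) ℝ) : Prop :=
  (∀ i j, 0 ≤ Q i j) ∧ ∀ i, ∑ j, Q i j = 1

/-- 𝒰_stat: streams generated by stationary policies of finite MDPs,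
`u_t = (Q^{t-1} · R)_s` (here `u t` is `u_{t+1}`, so `u t = (Q^t · R)_s`). -/
def UStat (u : ℕ → ℝ) : Prop :=
  ∃ (S : ℕ) (_ : 0 < S) (Q : Matrix (Fin S) (Fin S) ℝ) (R : Fin S → ℝ) (s : Fin S),
    RowStochastic Q ∧ ∀ t : ℕ, u t = ((Q ^ t).mulVec R) s

namespace Stmt12Aux

open Polynomial

variable {S : ℕ}

noncomputable def Complex.abs : AbsoluteValue ℂ ℝ :=
  IsAbsoluteValue.toAbsoluteValue (norm : ℂ → ℝ)

lemma Complex.abs_apply (z : ℂ) : Complex.abs z = ‖z‖ := rfl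

lemma Complex.abs_ofReal (x : ℝ) : Complex.abs (x : ℂ) = |x| := by
  rw [Complex.abs_apply, Complex.norm_real, Real.norm_eq_abs]

lemma Complex.sq_abs (z : ℂ) : Complex.abs z ^ 2 = Complex.normSq z := by
  rw [Complex.abs_apply, Complex.sq_norm]

lemma Complex.normSq_eq_abs (z : ℂ) : Complex.normSq z = Complex.abs z ^ 2 :=
  (Complex.sq_abs z).symm

lemma Complex.re_le_abs (z : ℂ) : z.re ≤ Complex.abs z := Complex.re_le_norm z

lemma Complex.abs_re_le_abs (z : ℂ) : |z.re| ≤ Complex.abs z := Complex.abs_re_le_norm z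

lemma Complex.abs_conj (z : ℂ) : Complex.abs ((starRingEnd ℂ) z) = Complex.abs z := by
  rw [Complex.abs_apply, Complex.abs_apply, Complex.norm_conj]

lemma Complex.abs_natCast (n : ℕ) : Complex.abs (n : ℂ) = n := by
  rw [Complex.abs_apply, Complex.norm_natCast]

lemma rs_mul {Q M : Matrix (Fin S) (Fin S) ℝ} (hQ : RowStochastic Q)
    (hM : RowStochastic M) : RowStochastic (Q * M) := by
  constructor
  · intro i j
    rw [Matrix.mul_apply]
    exact Finset.sum_nonneg fun k _ => mul_nonneg (hQ.1 i k) (hM.1 k j)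
  · intro i
    simp only [Matrix.mul_apply]
    rw [Finset.sum_comm]
    calc (∑ k, ∑ j, Q i k * M k j) = ∑ k, Q i k * ∑ j, M k j := by
          simp [Finset.mul_sum]
      _ = 1 := by simp [hM.2, hQ.2 i]

lemma rs_one : RowStochastic (1 : Matrix (Fin S) (Fin S) ℝ) := by
  constructor
  · intro i j
    by_cases h : i = j <;> simp [Matrix.one_apply, h]
  · intro i; simp [Matrix.one_apply]

lemma rs_pow {Q : Matrix (Fin S) (Fin S) ℝ} (hQ : RowStochastic Q) (t : ℕ) :
    RowStochastic (Q ^ t) := by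
  induction t with
  | zero => simpa using rs_one
  | succ n ih => rw [pow_succ]; exact rs_mul ih hQ

lemma bound_mulVec {M : Matrix (Fin S) (Fin S) ℝ} (hM : RowStochastic M)
    (v : Fin S → ℂ) (B : ℝ) (hB : ∀ j, Complex.abs (v j) ≤ B) (i : Fin S) :
    Complex.abs (((M.map (Complex.ofReal)).mulVec v) i) ≤ B := by
  have h1 : Complex.abs (∑ j, (M i j : ℂ) * v j) ≤ ∑ j, M i j * Complex.abs (v j) := by
    refine le_trans (Complex.abs.sum_le _ _) (le_of_eq ?_)
    refine Finset.sum_congr rfl fun j _ => ?_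
    rw [map_mul, Complex.abs_ofReal, abs_of_nonneg (hM.1 i j)]
  have h2 : ∑ j, M i j * Complex.abs (v j) ≤ ∑ j, M i j * B :=
    Finset.sum_le_sum fun j _ => mul_le_mul_of_nonneg_left (hB j) (hM.1 i j)
  have h3 : ∑ j, M i j * B = B := by rw [← Finset.sum_mul, hM.2 i, one_mul]
  calc Complex.abs (((M.map (Complex.ofReal)).mulVec v) i)
      = Complex.abs (∑ j, (M i j : ℂ) * v j) := by
        simp [Matrix.mulVec, dotProduct, Matrix.map_apply]
    _ ≤ B := by linarith

lemma map_pow_ofReal (Q : Matrix (Fin S) (Fin S) ℝ) (t : ℕ) :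
    (Q.map (Complex.ofReal)) ^ t = (Q ^ t).map (Complex.ofReal) := by
  have : Q.map (Complex.ofReal) = Complex.ofRealHom.mapMatrix Q := rfl
  rw [this, ← map_pow]; rfl

lemma mulVec_ofReal (M : Matrix (Fin S) (Fin S) ℝ) (r : Fin S → ℝ) (s : Fin S) :
    (M.map (Complex.ofReal)).mulVec (fun j => (r j : ℂ)) s = ((M.mulVec r) s : ℂ) := by
  simp [Matrix.mulVec, dotProduct, Matrix.map_apply]


lemma exists_eigenvector (A : Matrix (Fin S) (Fin S) ℂ)
    {lam : ℂ} (hroot : (minpoly ℂ A).IsRoot lam) :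
    ∃ e : Fin S → ℂ, e ≠ 0 ∧ A.mulVec e = lam • e := by
  have hA : IsIntegral ℂ A := IsIntegral.of_finite ℂ A
  obtain ⟨q, hq⟩ := (Polynomial.dvd_iff_isRoot).mpr hroot
  have hq0 : q ≠ 0 := by
    intro h; rw [h, mul_zero] at hq; exact (minpoly.ne_zero hA) hq
  have hdeg : q.degree < (minpoly ℂ A).degree := by
    rw [hq, Polynomial.degree_mul, Polynomial.degree_X_sub_C,
      Polynomial.degree_eq_natDegree hq0]
    exact_mod_cast lt_of_lt_of_le (Nat.lt_succ_self _) (by push_cast; omega)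
  have hne : Polynomial.aeval A q ≠ 0 := fun h =>
    absurd (minpoly.degree_le_of_ne_zero ℂ A hq0 h) (not_le.mpr hdeg)
  obtain ⟨i, j, hij⟩ : ∃ i j, (Polynomial.aeval A q) i j ≠ 0 := by
    by_contra h; push_neg at h
    exact hne (Matrix.ext fun i j => h i j)
  have h0 : (A - lam • 1) * Polynomial.aeval A q = 0 := by
    have hm := minpoly.aeval ℂ A
    rw [hq, map_mul] at hm
    have : Polynomial.aeval A (X - Polynomial.C lam) = A - lam • 1 := by
      simp [Algebra.algebraMap_eq_smul_one]
    rwa [this] at hm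
  refine ⟨(Polynomial.aeval A q).mulVec (Pi.single j 1), ?_, ?_⟩
  · intro h
    have := congrFun h i
    simp [Matrix.mulVec_single] at this
    exact hij this
  · have : (A - lam • 1).mulVec ((Polynomial.aeval A q).mulVec (Pi.single j 1)) = 0 := by
      rw [Matrix.mulVec_mulVec, h0, Matrix.zero_mulVec]
    rw [Matrix.sub_mulVec, Matrix.smul_mulVec, Matrix.one_mulVec, sub_eq_zero] at this
    exact this

lemma eq_of_re_eq_sq {z : ℂ} {m : ℝ} (h1 : z.re = m^2) (h2 : Complex.abs z ≤ m^2) :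
    z = ((m^2 : ℝ) : ℂ) := by
  have e1 : (Complex.abs z)^2 = z.re*z.re + z.im*z.im := by
    rw [Complex.sq_abs, Complex.normSq_apply]
  have habs : Complex.abs z = m^2 := le_antisymm h2 (h1 ▸ Complex.re_le_abs z)
  have him : z.im = 0 := by nlinarith
  apply Complex.ext <;> simp [h1, him, ← Complex.ofReal_pow]


lemma root_abs_le_one (hS : 0 < S) {Q : Matrix (Fin S) (Fin S) ℝ} (hQ : RowStochastic Q)
    {lam : ℂ} (hroot : (minpoly ℂ (Q.map Complex.ofReal)).IsRoot lam) :
    Complex.abs lam ≤ 1 := by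
  obtain ⟨e, he0, heig⟩ := exists_eigenvector (Q.map Complex.ofReal) hroot
  haveI : Nonempty (Fin S) := ⟨⟨0, hS⟩⟩
  obtain ⟨i, -, hi⟩ := Finset.exists_max_image Finset.univ (fun j => Complex.abs (e j))
    ⟨Classical.arbitrary (Fin S), Finset.mem_univ _⟩
  have hb := bound_mulVec hQ e (Complex.abs (e i)) (fun j => hi j (Finset.mem_univ j)) i
  rw [heig] at hb
  have h1 : Complex.abs lam * Complex.abs (e i) ≤ Complex.abs (e i) := by
    simpa [map_mul] using hb
  have hpos : 0 < Complex.abs (e i) := by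
    obtain ⟨j, hj⟩ := Function.ne_iff.mp he0
    exact lt_of_lt_of_le (Complex.abs.pos (by simpa using hj)) (hi j (Finset.mem_univ j))
  nlinarith

lemma unit_root_pow (hS : 0 < S) {Q : Matrix (Fin S) (Fin S) ℝ} (hQ : RowStochastic Q)
    {lam : ℂ} (hroot : (minpoly ℂ (Q.map Complex.ofReal)).IsRoot lam)
    (habs : Complex.abs lam = 1) : lam ^ (Nat.factorial S) = 1 := by
  obtain ⟨e, he0, heig⟩ := exists_eigenvector (Q.map Complex.ofReal) hroot
  haveI : Nonempty (Fin S) := ⟨⟨0, hS⟩⟩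
  obtain ⟨i₀, -, hi₀⟩ := Finset.exists_max_image Finset.univ (fun j => Complex.abs (e j))
    ⟨Classical.arbitrary (Fin S), Finset.mem_univ _⟩
  set m := Complex.abs (e i₀) with hmdef
  have hmax : ∀ j, Complex.abs (e j) ≤ m := fun j => hi₀ j (Finset.mem_univ j)
  have hm : 0 < m := by
    obtain ⟨j, hj⟩ := Function.ne_iff.mp he0
    exact lt_of_lt_of_le (Complex.abs.pos (by simpa using hj)) (hmax j)
  have hstep : ∀ i, Complex.abs (e i) = m → ∃ j, e j = lam * e i ∧ Complex.abs (e j) = m := by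
    intro i hi
    have hrow : ∑ j, (Q i j : ℂ) * e j = lam * e i := by
      have := congrFun heig i
      simpa [Matrix.mulVec, dotProduct, Matrix.map_apply] using this
    set w := lam * e i with hw
    have hwabs : Complex.abs w = m := by rw [hw, map_mul, habs, one_mul, hi]
    have hsum : ∑ j, Q i j * ((starRingEnd ℂ) w * e j).re = m^2 := by
      have h1 : ((starRingEnd ℂ) w * ∑ j, (Q i j : ℂ) * e j).re
          = ((starRingEnd ℂ) w * w).re := by rw [hrow]
      have h2 : ((starRingEnd ℂ) w * w).re = m^2 := by
        rw [mul_comm, Complex.mul_conj, Complex.ofReal_re, Complex.normSq_eq_abs, hwabs]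
      rw [← h2, ← h1, Finset.mul_sum, Complex.re_sum]
      refine Finset.sum_congr rfl fun j _ => ?_
      rw [show (starRingEnd ℂ) w * ((Q i j:ℂ) * e j)
          = (Q i j : ℂ) * ((starRingEnd ℂ) w * e j) by ring]
      exact (Complex.re_ofReal_mul _ _).symm
    have hle : ∀ j, ((starRingEnd ℂ) w * e j).re ≤ m^2 := by
      intro j
      calc ((starRingEnd ℂ) w * e j).re ≤ Complex.abs ((starRingEnd ℂ) w * e j) :=
            Complex.re_le_abs _
        _ = m * Complex.abs (e j) := by rw [map_mul, Complex.abs_conj, hwabs]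
        _ ≤ m * m := mul_le_mul_of_nonneg_left (hmax j) hm.le
        _ = m^2 := (sq m).symm
    have hzero : ∀ j, Q i j * (m^2 - ((starRingEnd ℂ) w * e j).re) = 0 := by
      have hsum0 : ∑ j, Q i j * (m^2 - ((starRingEnd ℂ) w * e j).re) = 0 := by
        simp only [mul_sub, Finset.sum_sub_distrib, hsum, ← Finset.sum_mul, hQ.2 i]
        ring
      have := (Finset.sum_eq_zero_iff_of_nonneg
        (fun j _ => mul_nonneg (hQ.1 i j) (by linarith [hle j]))).mp hsum0
      exact fun j => this j (Finset.mem_univ j)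
    obtain ⟨j, hj⟩ : ∃ j, 0 < Q i j := by
      by_contra h; push_neg at h
      have hs : ∑ j, Q i j ≤ 0 := Finset.sum_nonpos fun j _ => h j
      rw [hQ.2 i] at hs; linarith
    have hφ : ((starRingEnd ℂ) w * e j).re = m^2 := by
      rcases mul_eq_zero.mp (hzero j) with h | h
      · exact absurd h (ne_of_gt hj)
      · linarith
    have habsle : Complex.abs ((starRingEnd ℂ) w * e j) ≤ m^2 := by
      rw [map_mul, Complex.abs_conj, hwabs, sq]
      exact mul_le_mul_of_nonneg_left (hmax j) hm.le
    have hz := eq_of_re_eq_sq hφ habsle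
    have hww : (starRingEnd ℂ) w * w = ((m^2:ℝ):ℂ) := by
      rw [mul_comm, Complex.mul_conj]
      simp [Complex.normSq_eq_abs, hwabs]
    have hwe : (starRingEnd ℂ) w * e j = (starRingEnd ℂ) w * w := by rw [hz, hww]
    have hwne : (starRingEnd ℂ) w ≠ 0 := by
      have habs2 : Complex.abs ((starRingEnd ℂ) w) = m := by rw [Complex.abs_conj, hwabs]
      intro h; rw [h] at habs2; simp at habs2; linarith
    have hej : e j = w := mul_left_cancel₀ hwne hwe
    exact ⟨j, hej, by rw [hej, hwabs]⟩
  -- iterate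
  let F : {i : Fin S // Complex.abs (e i) = m} → {i : Fin S // Complex.abs (e i) = m} :=
    fun x => ⟨(hstep x.1 x.2).choose, (hstep x.1 x.2).choose_spec.2⟩
  let seq : ℕ → {i : Fin S // Complex.abs (e i) = m} := fun k => F^[k] ⟨i₀, rfl⟩
  have hseq : ∀ k, e (seq k).1 = lam ^ k * e i₀ := by
    intro k
    induction k with
    | zero => simp [seq]
    | succ n ih =>
      have hs : seq (n+1) = F (seq n) := Function.iterate_succ_apply' F n _
      rw [hs]
      show e ((hstep (seq n).1 (seq n).2).choose) = _
      rw [(hstep (seq n).1 (seq n).2).choose_spec.1, ih, pow_succ]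
      ring
  obtain ⟨a, b, hab, heq⟩ := Fintype.exists_ne_map_eq_of_card_lt
    (fun k : Fin (S+1) => (seq k.1).1) (by simp)
  have hei₀ : e i₀ ≠ 0 := fun h => by rw [hmdef, h] at hm; simp at hm
  have hpow : lam ^ a.1 = lam ^ b.1 := by
    have h1 : e (seq a.1).1 = e (seq b.1).1 := by rw [heq]
    rw [hseq, hseq] at h1
    exact mul_right_cancel₀ hei₀ h1
  have hvne : a.1 ≠ b.1 := fun h => hab (Fin.ext h)
  have hlamne : lam ≠ 0 := by
    intro h; rw [h] at habs; simp at habs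
  -- get d with lam^d = 1, 0 < d ≤ S
  have key : ∀ c d : ℕ, c < d → d ≤ S → lam ^ c = lam ^ d → lam ^ (Nat.factorial S) = 1 := by
    intro c d hcd hdS hcd2
    have h1 : lam ^ c * lam ^ (d - c) = lam ^ c * 1 := by
      rw [← pow_add, mul_one, Nat.add_sub_cancel' hcd.le]
      exact hcd2.symm
    have h2 : lam ^ (d - c) = 1 := mul_left_cancel₀ (pow_ne_zero c hlamne) h1
    have hdvd : (d - c) ∣ Nat.factorial S := Nat.dvd_factorial (by omega) (by omega)
    obtain ⟨k, hk⟩ := hdvd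
    rw [hk, pow_mul, h2, one_pow]
  rcases lt_trichotomy a.1 b.1 with h | h | h
  · exact key a.1 b.1 h (by omega) hpow
  · exact absurd h hvne
  · exact key b.1 a.1 h (by omega) hpow.symm


lemma unit_root_simple (hS : 0 < S) {Q : Matrix (Fin S) (Fin S) ℝ} (hQ : RowStochastic Q)
    {lam : ℂ} (habs : Complex.abs lam = 1) :
    ¬ ((X - Polynomial.C lam)^2 ∣ minpoly ℂ (Q.map Complex.ofReal)) := by
  intro hdvd
  set A := Q.map Complex.ofReal with hA
  have hint : IsIntegral ℂ A := IsIntegral.of_finite ℂ A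
  obtain ⟨q, hq⟩ := hdvd
  have hμ0 : minpoly ℂ A ≠ 0 := minpoly.ne_zero hint
  have hq0 : q ≠ 0 := by intro h; rw [h, mul_zero] at hq; exact hμ0 hq
  have hX0 : (X - Polynomial.C lam) * q ≠ 0 :=
    mul_ne_zero (Polynomial.X_sub_C_ne_zero lam) hq0
  have hdeg : ((X - Polynomial.C lam) * q).degree < (minpoly ℂ A).degree := by
    rw [hq, Polynomial.degree_mul, Polynomial.degree_mul, Polynomial.degree_pow,
      Polynomial.degree_X_sub_C, Polynomial.degree_eq_natDegree hq0, two_smul]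
    exact_mod_cast by push_cast; omega
  have hne : Polynomial.aeval A ((X - Polynomial.C lam) * q) ≠ 0 := fun h =>
    absurd (minpoly.degree_le_of_ne_zero ℂ A hX0 h) (not_le.mpr hdeg)
  obtain ⟨i, j, hij⟩ : ∃ i j, (Polynomial.aeval A ((X - Polynomial.C lam) * q)) i j ≠ 0 := by
    by_contra h; push_neg at h
    exact hne (Matrix.ext fun i j => h i j)
  set v : Fin S → ℂ := Pi.single j 1 with hv
  set w := (Polynomial.aeval A q).mulVec v with hwdef
  set ee := (Polynomial.aeval A ((X - Polynomial.C lam) * q)).mulVec v with heedef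
  have heei : ee i ≠ 0 := by
    rw [heedef, hv]
    simpa [Matrix.mulVec_single] using hij
  have haevalX : Polynomial.aeval A (X - Polynomial.C lam) = A - lam • 1 := by
    simp [Algebra.algebraMap_eq_smul_one]
  have hee : ee = A.mulVec w - lam • w := by
    rw [heedef, map_mul, haevalX, ← Matrix.mulVec_mulVec, hwdef, Matrix.sub_mulVec,
      Matrix.smul_mulVec, Matrix.one_mulVec]
  have he2 : A.mulVec ee = lam • ee := by
    have h0 : (A - lam • 1) * Polynomial.aeval A ((X - Polynomial.C lam) * q) = 0 := by
      have hm := minpoly.aeval ℂ A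
      rw [hq] at hm
      calc (A - lam • 1) * Polynomial.aeval A ((X - Polynomial.C lam) * q)
          = Polynomial.aeval A ((X - Polynomial.C lam) * ((X - Polynomial.C lam) * q)) := by
            simp [map_mul, haevalX, mul_assoc]
        _ = Polynomial.aeval A ((X - Polynomial.C lam)^2 * q) := by congr 1; ring
        _ = 0 := hm
    have := congrArg (fun M => Matrix.mulVec M v) h0
    simp only [← Matrix.mulVec_mulVec, Matrix.zero_mulVec] at this
    rw [← heedef] at this
    rw [Matrix.sub_mulVec, Matrix.smul_mulVec, Matrix.one_mulVec, sub_eq_zero] at this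
    exact this
  have hAw : A.mulVec w = lam • w + ee := by rw [hee]; abel
  -- growth formula
  have hform : ∀ t : ℕ, (A^(t+1)).mulVec w = lam^(t+1) • w + (((t:ℂ)+1) * lam^t) • ee := by
    intro t
    induction t with
    | zero => simpa using hAw
    | succ n ih =>
      rw [pow_succ' A (n+1), ← Matrix.mulVec_mulVec, ih]
      rw [Matrix.mulVec_add, Matrix.mulVec_smul, Matrix.mulVec_smul, hAw, he2]
      push_cast
      module
  -- boundedness contradiction
  set B := ∑ k, Complex.abs (w k) with hB
  have hBb : ∀ k, Complex.abs (w k) ≤ B :=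
    fun k => Finset.single_le_sum (fun k _ => Complex.abs.nonneg (w k)) (Finset.mem_univ k)
  have hbd : ∀ t : ℕ, Complex.abs (((A^(t+1)).mulVec w) i) ≤ B := by
    intro t
    have := bound_mulVec (rs_pow hQ (t+1)) w B hBb i
    rwa [← map_pow_ofReal, ← hA] at this
  have hlow : ∀ t : ℕ, ((t:ℝ)+1) * Complex.abs (ee i) - Complex.abs (w i) ≤
      Complex.abs (((A^(t+1)).mulVec w) i) := by
    intro t
    have h1 := congrFun (hform t) i
    have : (((t:ℂ)+1) * lam^t) • ee i = ((A^(t+1)).mulVec w) i - lam^(t+1) • w i := by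
      rw [h1]; simp
    have h2 : Complex.abs ((((t:ℂ)+1) * lam^t) * ee i) ≤
        Complex.abs (((A^(t+1)).mulVec w) i) + Complex.abs (lam^(t+1) * w i) := by
      rw [show (((t:ℂ)+1) * lam^t) * ee i = ((A^(t+1)).mulVec w) i - lam^(t+1) * w i by
        simpa [smul_eq_mul] using this]
      exact (Complex.abs.sub_le_add _ _)
    have h3 : Complex.abs ((((t:ℂ)+1) * lam^t) * ee i) = ((t:ℝ)+1) * Complex.abs (ee i) := by
      rw [map_mul, map_mul, map_pow, habs, one_pow, mul_one]
      congr 1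
      rw [show ((t:ℂ)+1) = ((t+1:ℕ):ℂ) by push_cast; ring]
      rw [Complex.abs_natCast]
      push_cast; ring
    have h4 : Complex.abs (lam^(t+1) * w i) = Complex.abs (w i) := by
      rw [map_mul, map_pow, habs, one_pow, one_mul]
    rw [h3, h4] at h2
    linarith
  obtain ⟨n, hn⟩ := exists_nat_gt ((B + Complex.abs (w i)) / Complex.abs (ee i))
  have heipos : 0 < Complex.abs (ee i) := Complex.abs.pos heei
  have : ((n:ℝ)+1) * Complex.abs (ee i) - Complex.abs (w i) ≤ B :=
    le_trans (hlow n) (hbd n)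
  rw [div_lt_iff₀ heipos] at hn
  nlinarith

lemma decay (A : Matrix (Fin S) (Fin S) ℂ) {ρ : ℝ} (hρ : 0 < ρ)
    (L : Multiset ℂ) (hL : ∀ z ∈ L, Complex.abs z ≤ ρ)
    (w : Fin S → ℂ)
    (hw : (Polynomial.aeval A (L.map (fun z => X - Polynomial.C z)).prod).mulVec w = 0) :
    ∃ Cc : ℝ, ∀ (t : ℕ) (i : Fin S),
      Complex.abs (((A ^ t).mulVec w) i) ≤ Cc * ((t:ℝ)+1) ^ (Multiset.card L) * ρ ^ t := by
  induction L using Multiset.induction_on generalizing w with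
  | empty =>
    refine ⟨0, fun t i => ?_⟩
    simp only [Multiset.map_zero, Multiset.prod_zero, map_one, Matrix.one_mulVec] at hw
    rw [hw]
    simp
  | cons z L ih =>
    have hz : Complex.abs z ≤ ρ := hL z (Multiset.mem_cons_self z L)
    have hL' : ∀ y ∈ L, Complex.abs y ≤ ρ := fun y hy => hL y (Multiset.mem_cons_of_mem hy)
    set w' := A.mulVec w - z • w with hw'def
    have hw' : (Polynomial.aeval A (L.map (fun z => X - Polynomial.C z)).prod).mulVec w' = 0 := by
      have hexp : (Multiset.map (fun z => X - Polynomial.C z) (z ::ₘ L)).prod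
          = (L.map (fun z => X - Polynomial.C z)).prod * (X - Polynomial.C z) := by
        rw [Multiset.map_cons, Multiset.prod_cons, mul_comm]
      rw [hexp, map_mul, ← Matrix.mulVec_mulVec] at hw
      have haevalX : Polynomial.aeval A (X - Polynomial.C z) = A - z • 1 := by
        simp [Algebra.algebraMap_eq_smul_one]
      rw [haevalX, Matrix.sub_mulVec, Matrix.smul_mulVec, Matrix.one_mulVec] at hw
      rw [hw'def]
      exact hw
    obtain ⟨C', hC'⟩ := ih hL' w' hw'
    set C0 := ∑ k, Complex.abs (w k) with hC0
    have hC0b : ∀ k, Complex.abs (w k) ≤ C0 :=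
      fun k => Finset.single_le_sum (fun k _ => Complex.abs.nonneg (w k)) (Finset.mem_univ k)
    have hC0nn : 0 ≤ C0 := Finset.sum_nonneg fun k _ => Complex.abs.nonneg (w k)
    set Cc := max C0 (C' / ρ) with hCc
    have hCcnn : 0 ≤ Cc := le_trans hC0nn (le_max_left _ _)
    refine ⟨Cc, fun t => ?_⟩
    rw [Multiset.card_cons]
    induction t with
    | zero =>
      intro i
      have hgoal : Complex.abs (w i) ≤ Cc := le_trans (hC0b i) (le_max_left C0 (C'/ρ))
      simpa using hgoal
    | succ n ihn =>
      intro i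
      push_cast
      have hstep : ((A^(n+1)).mulVec w) i = z * ((A^n).mulVec w) i + ((A^n).mulVec w') i := by
        have : (A^(n+1)).mulVec w = (A^n).mulVec (A.mulVec w) := by
          rw [pow_succ A n, ← Matrix.mulVec_mulVec]
        rw [this, show A.mulVec w = z • w + w' by rw [hw'def]; abel]
        rw [Matrix.mulVec_add, Matrix.mulVec_smul]
        simp [smul_eq_mul]
      have h1 : Complex.abs (((A^(n+1)).mulVec w) i) ≤
          ρ * Complex.abs (((A^n).mulVec w) i) + C' * ((n:ℝ)+1) ^ (Multiset.card L) * ρ ^ n := by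
        rw [hstep]
        refine le_trans (Complex.abs.add_le _ _) ?_
        gcongr
        · rw [map_mul]
          exact mul_le_mul_of_nonneg_right hz (Complex.abs.nonneg _)
        · have := hC' n i
          linarith [this]
      have h2 := ihn i
      -- combine
      have hpow1 : ((n:ℝ)+1) ^ (Multiset.card L + 1) + ((n:ℝ)+1) ^ (Multiset.card L)
          ≤ ((n:ℝ)+2) ^ (Multiset.card L + 1) := by
        have hb : ((n:ℝ)+1) ^ (Multiset.card L) ≤ ((n:ℝ)+2) ^ (Multiset.card L) := by
          gcongr <;> linarith
        calc ((n:ℝ)+1) ^ (Multiset.card L + 1) + ((n:ℝ)+1) ^ (Multiset.card L)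
            = (((n:ℝ)+1) + 1) * ((n:ℝ)+1) ^ (Multiset.card L) := by ring
          _ ≤ (((n:ℝ)+2)) * ((n:ℝ)+2) ^ (Multiset.card L) := by
              refine mul_le_mul (by linarith) hb (by positivity) (by linarith)
          _ = ((n:ℝ)+2) ^ (Multiset.card L + 1) := by ring
      have hC'le : C' ≤ Cc * ρ := by
        have := le_max_right C0 (C' / ρ)
        rw [hCc]
        calc C' = (C' / ρ) * ρ := by field_simp
          _ ≤ max C0 (C'/ρ) * ρ := mul_le_mul_of_nonneg_right this hρ.le
      calc Complex.abs (((A^(n+1)).mulVec w) i)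
          ≤ ρ * (Cc * ((n:ℝ)+1) ^ (Multiset.card L + 1) * ρ ^ n)
            + C' * ((n:ℝ)+1) ^ (Multiset.card L) * ρ ^ n := by
            refine le_trans h1 ?_
            gcongr
        _ ≤ Cc * ((n:ℝ)+2) ^ (Multiset.card L + 1) * ρ ^ (n+1) := by
            have hterm : C' * ((n:ℝ)+1) ^ (Multiset.card L) * ρ ^ n
                ≤ Cc * ρ * (((n:ℝ)+1) ^ (Multiset.card L) * ρ ^ n) := by
              have hx : (0:ℝ) ≤ ((n:ℝ)+1) ^ (Multiset.card L) * ρ ^ n := by positivity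
              calc C' * ((n:ℝ)+1) ^ (Multiset.card L) * ρ ^ n
                  = C' * (((n:ℝ)+1) ^ (Multiset.card L) * ρ ^ n) := by ring
                _ ≤ Cc * ρ * (((n:ℝ)+1) ^ (Multiset.card L) * ρ ^ n) :=
                    mul_le_mul_of_nonneg_right hC'le hx
            have hmain : ρ * (Cc * ((n:ℝ)+1) ^ (Multiset.card L + 1) * ρ ^ n)
                + Cc * ρ * (((n:ℝ)+1) ^ (Multiset.card L) * ρ ^ n)
                = Cc * (((n:ℝ)+1) ^ (Multiset.card L + 1) + ((n:ℝ)+1) ^ (Multiset.card L))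
                  * ρ ^ (n+1) := by ring
            have h5 : Cc * (((n:ℝ)+1) ^ (Multiset.card L + 1) + ((n:ℝ)+1) ^ (Multiset.card L))
                  * ρ ^ (n+1) ≤ Cc * ((n:ℝ)+2) ^ (Multiset.card L + 1) * ρ ^ (n+1) := by
              have : (0:ℝ) ≤ ρ ^ (n+1) := by positivity
              refine mul_le_mul_of_nonneg_right ?_ this
              exact mul_le_mul_of_nonneg_left hpow1 hCcnn
            linarith
        _ = Cc * (((n:ℝ)+1)+1) ^ (Multiset.card L + 1) * ρ ^ (n+1) := by ring_nf
      -- adjust cast: goal uses ((n+1:ℕ):ℝ)+1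
      


lemma coprime_prod (f : Polynomial ℂ) (M : Multiset ℂ) (h : ∀ z ∈ M, ¬ f.IsRoot z) :
    IsCoprime f (M.map fun a => X - Polynomial.C a).prod := by
  induction M using Multiset.induction_on with
  | empty => simpa using isCoprime_one_right
  | cons z L ih =>
    rw [Multiset.map_cons, Multiset.prod_cons]
    refine IsCoprime.mul_right ?_ (ih fun y hy => h y (Multiset.mem_cons_of_mem hy))
    have hirr := Polynomial.irreducible_X_sub_C z
    exact ((hirr.coprime_iff_not_dvd).mpr (fun hdvd =>
      (h z (Multiset.mem_cons_self _ _)) ((Polynomial.dvd_iff_isRoot).mp hdvd))).symm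

lemma master (hS : 0 < S) (Q : Matrix (Fin S) (Fin S) ℝ) (hQ : RowStochastic Q)
    (r : Fin S → ℝ) (s : Fin S) :
    ∃ (p : ℕ) (_ : 0 < p) (ρ : ℝ) (_ : 0 < ρ) (_ : ρ < 1) (k : ℕ) (Cc : ℝ) (w Δ : ℕ → ℝ),
      (∀ t, w (t + p) = w t) ∧ (∀ t, |Δ t| ≤ Cc * ((t:ℝ)+1)^k * ρ^t) ∧
      (∀ t, ((Q ^ t).mulVec r) s = w t + Δ t) := by
  classical
  set A := Q.map Complex.ofReal with hA
  have hint : IsIntegral ℂ A := IsIntegral.of_finite ℂ A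
  set μ := minpoly ℂ A with hμ
  have hmon : μ.Monic := minpoly.monic hint
  have hcard : μ.roots.card = μ.natDegree :=
    (Polynomial.splits_iff_card_roots).mp (IsAlgClosed.splits μ)
  have hprod : (μ.roots.map fun a => X - Polynomial.C a).prod = μ :=
    Polynomial.prod_multiset_X_sub_C_of_monic_of_roots_card_eq hmon hcard
  set r0 := μ.roots.filter (fun z => Complex.abs z < 1) with hr0
  set r1 := μ.roots.filter (fun z => ¬ Complex.abs z < 1) with hr1
  have hsplit2 : r0 + r1 = μ.roots := Multiset.filter_add_not _ _
  set f := (r0.map fun a => X - Polynomial.C a).prod with hf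
  set g := (r1.map fun a => X - Polynomial.C a).prod with hg
  have hfg : f * g = μ := by
    rw [hf, hg, ← Multiset.prod_add, ← Multiset.map_add, hsplit2, hprod]
  have hroot_le : ∀ z ∈ μ.roots, Complex.abs z ≤ 1 := fun z hz =>
    root_abs_le_one hS hQ (Polynomial.isRoot_of_mem_roots hz)
  have hr1abs : ∀ z ∈ r1, Complex.abs z = 1 := by
    intro z hz
    rw [hr1] at hz
    have h1 := Multiset.mem_filter.mp hz
    exact le_antisymm (hroot_le z h1.1) (not_lt.mp h1.2)
  set p := Nat.factorial S with hp
  have hppos : 0 < p := Nat.factorial_pos S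
  have hXp0 : ((X:Polynomial ℂ)^p - 1) ≠ 0 := by
    have hm : ((X:Polynomial ℂ)^p - Polynomial.C 1).Monic :=
      Polynomial.monic_X_pow_sub_C 1 hppos.ne'
    rw [map_one] at hm
    exact hm.ne_zero
  -- r1 ≤ roots of X^p - 1
  have hr1le : r1 ≤ ((X:Polynomial ℂ)^p - 1).roots := by
    rw [Multiset.le_iff_count]
    intro z
    rw [hr1, Multiset.count_filter]
    split
    · rename_i hpred
      by_cases hzμ : z ∈ μ.roots
      · have habs1 : Complex.abs z = 1 := le_antisymm (hroot_le z hzμ) (not_lt.mp hpred)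
        have hzroot := Polynomial.isRoot_of_mem_roots hzμ
        have hzp : z ^ p = 1 := unit_root_pow hS hQ hzroot habs1
        have hcount1 : Multiset.count z μ.roots ≤ 1 := by
          rw [Polynomial.count_roots]
          by_contra hgt
          push_neg at hgt
          have hdvd2 : (X - Polynomial.C z)^2 ∣ μ :=
            dvd_trans (pow_dvd_pow _ hgt) (Polynomial.pow_rootMultiplicity_dvd μ z)
          exact unit_root_simple hS hQ habs1 hdvd2
        have hmem : z ∈ ((X:Polynomial ℂ)^p - 1).roots := by
          rw [Polynomial.mem_roots hXp0]
          simp [Polynomial.IsRoot, hzp]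
        exact le_trans hcount1 (Multiset.one_le_count_iff_mem.mpr hmem)
      · simp [Multiset.count_eq_zero_of_notMem hzμ]
    · simp
  have hgdvd : g ∣ ((X:Polynomial ℂ)^p - 1) :=
    dvd_trans (Multiset.prod_dvd_prod_of_le (Multiset.map_le_map hr1le))
      (Polynomial.prod_multiset_X_sub_C_dvd _)
  -- ρ
  set T := ((μ.roots.toFinset.filter (fun z => Complex.abs z < 1)).image Complex.abs) with hT
  set ρ := (insert (1/2 : ℝ) T).max' (Finset.insert_nonempty _ _) with hρdef
  have hρpos : 0 < ρ :=
    lt_of_lt_of_le (by norm_num) (Finset.le_max' _ _ (Finset.mem_insert_self _ _))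
  have hρlt1 : ρ < 1 := by
    rw [hρdef, Finset.max'_lt_iff]
    intro x hx
    rcases Finset.mem_insert.mp hx with h | h
    · rw [h]; norm_num
    · obtain ⟨z, hz, rfl⟩ := Finset.mem_image.mp h
      exact (Finset.mem_filter.mp hz).2
  have hr0le : ∀ z ∈ r0, Complex.abs z ≤ ρ := by
    intro z hz
    rw [hr0] at hz
    have h1 := Multiset.mem_filter.mp hz
    refine Finset.le_max' _ _ ?_
    refine Finset.mem_insert_of_mem ?_
    exact Finset.mem_image_of_mem _
      (Finset.mem_filter.mpr ⟨Multiset.mem_toFinset.mpr h1.1, h1.2⟩)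
  -- coprime and Bezout
  have hfroot : ∀ z ∈ r1, ¬ f.IsRoot z := by
    intro z hz hroot
    rw [hf, Polynomial.IsRoot, Polynomial.eval_multiset_prod, Multiset.map_map] at hroot
    rw [Multiset.prod_eq_zero_iff] at hroot
    obtain ⟨a0, ha0, ha0z⟩ := Multiset.mem_map.mp hroot
    simp only [Function.comp_apply, Polynomial.eval_sub, Polynomial.eval_X,
      Polynomial.eval_C] at ha0z
    have : z = a0 := by exact sub_eq_zero.mp ha0z
    rw [hr0] at ha0
    have h1 := (Multiset.mem_filter.mp ha0).2
    rw [← this] at h1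
    rw [hr1abs z hz] at h1
    linarith
  have hcop : IsCoprime f g := by rw [hg]; exact coprime_prod f r1 hfroot
  obtain ⟨a, b, hab⟩ := hcop
  set v : Fin S → ℂ := fun j => (r j : ℂ) with hv
  set v1 := (Polynomial.aeval A (a * f)).mulVec v with hv1
  set v0 := (Polynomial.aeval A (b * g)).mulVec v with hv0
  have hsum : v1 + v0 = v := by
    rw [hv1, hv0, ← Matrix.add_mulVec, ← map_add, hab, map_one, Matrix.one_mulVec]
  have haevalμ : Polynomial.aeval A μ = 0 := minpoly.aeval ℂ A
  -- periodicity of v1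
  obtain ⟨h', hh'⟩ := hgdvd
  have hper0 : (A^p).mulVec v1 = v1 := by
    have h0 : (A^p - 1) * (Polynomial.aeval A (a * f)) = 0 := by
      have hXp : (Polynomial.aeval A ((X:Polynomial ℂ)^p - 1)) = A^p - 1 := by simp
      calc (A^p - 1) * Polynomial.aeval A (a * f)
          = Polynomial.aeval A (((X:Polynomial ℂ)^p - 1) * (a * f)) := by
            conv_rhs => rw [map_mul]
            rw [hXp]
        _ = Polynomial.aeval A ((h' * a) * (f * g)) := by congr 1; rw [hh']; ring
        _ = 0 := by rw [hfg, map_mul, haevalμ, mul_zero]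
    have h1 := congrArg (fun M => Matrix.mulVec M v) h0
    simp only [← Matrix.mulVec_mulVec, Matrix.zero_mulVec] at h1
    rw [Matrix.sub_mulVec, Matrix.one_mulVec, sub_eq_zero] at h1
    exact h1
  have hper : ∀ t, (A^(t+p)).mulVec v1 = (A^t).mulVec v1 := by
    intro t
    rw [pow_add, ← Matrix.mulVec_mulVec, hper0]
  -- decay of v0
  have hfv0 : (Polynomial.aeval A f).mulVec v0 = 0 := by
    have h0 : (Polynomial.aeval A f) * (Polynomial.aeval A (b * g)) = 0 := by
      rw [← map_mul, show f * (b * g) = b * (f * g) by ring, hfg, map_mul, haevalμ, mul_zero]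
    have h1 := congrArg (fun M => Matrix.mulVec M v) h0
    simp only [← Matrix.mulVec_mulVec, Matrix.zero_mulVec] at h1
    exact h1
  obtain ⟨Cc, hCc⟩ := decay A hρpos r0 hr0le v0 (by rw [← hf]; exact hfv0)
  refine ⟨p, hppos, ρ, hρpos, hρlt1, Multiset.card r0, Cc,
    (fun t => (((A^t).mulVec v1) s).re), (fun t => (((A^t).mulVec v0) s).re), ?_, ?_, ?_⟩
  · intro t
    show ((A^(t+p)).mulVec v1 s).re = ((A^t).mulVec v1 s).re
    rw [hper t]
  · intro t
    exact le_trans (Complex.abs_re_le_abs _) (hCc t s)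
  · intro t
    have hvt : ((A^t).mulVec v) s = ((((Q^t).mulVec r) s : ℝ) : ℂ) := by
      rw [hA, map_pow_ofReal, hv]
      exact mulVec_ofReal (Q^t) r s
    have hsplitv : ((A^t).mulVec v) s = ((A^t).mulVec v1) s + ((A^t).mulVec v0) s := by
      conv_lhs => rw [← hsum]
      rw [Matrix.mulVec_add]
      rfl
    have := congrArg Complex.re hsplitv
    rw [hvt] at this
    simpa using this

end Stmt12Aux

/-- every stream generated by a stationary policy is
asymptotically periodic. -/
theorem stmt_12 (S : ℕ) (hS : 0 < S) (Q : Matrix (Fin S) (Fin S) ℝ)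
    (hQ : RowStochastic Q) (r : Fin S → ℝ) (s : Fin S) (u : ℕ → ℝ)
    (hu : ∀ t : ℕ, u t = ((Q ^ t).mulVec r) s) :
    ∃ (lam : ℝ) (w Δ : ℕ → ℝ), 0 < lam ∧ EvPeriodic w ∧
      Filter.Tendsto (fun t : ℕ => Real.exp (lam * t) * Δ t) Filter.atTop (nhds 0) ∧
      u = w + Δ := by
  obtain ⟨p, hp, ρ, hρ0, hρ1, k, Cc, w, Δ, hper, hΔ, hdecomp⟩ :=
    Stmt12Aux.master hS Q hQ r s
  set σ := Real.sqrt ρ with hσ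
  have hσ0 : 0 < σ := Real.sqrt_pos.mpr hρ0
  have hσ1 : σ < 1 := by
    rw [hσ, Real.sqrt_lt' one_pos]
    simpa using hρ1
  have hσ2 : σ^2 = ρ := Real.sq_sqrt hρ0.le
  refine ⟨-Real.log σ, w, Δ, neg_pos.mpr (Real.log_neg hσ0 hσ1),
    ⟨p, 0, hp, fun t _ => hper t⟩, ?_, ?_⟩
  · have hexp : Real.exp (-Real.log σ) = σ⁻¹ := by
      rw [Real.exp_neg, Real.exp_log hσ0]
    have base : Filter.Tendsto (fun n : ℕ => (n:ℝ)^k * σ^n) Filter.atTop (nhds 0) :=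
      tendsto_pow_const_mul_const_pow_of_lt_one k hσ0.le hσ1
    have comp : Filter.Tendsto (fun t : ℕ => ((Cc/σ) * (((t+1:ℕ):ℝ)^k * σ^(t+1))))
        Filter.atTop (nhds 0) := by
      have h2 := (base.comp (tendsto_add_atTop_nat 1)).const_mul (Cc/σ)
      simpa using h2
    refine squeeze_zero_norm (fun t => ?_) comp
    have hkey : Real.exp (-Real.log σ * (t:ℝ)) * ρ^t = σ^t := by
      rw [show -Real.log σ * (t:ℝ) = (t:ℝ) * (-Real.log σ) from mul_comm _ _,
        Real.exp_nat_mul, hexp, ← hσ2, ← mul_pow, sq, inv_mul_cancel_left₀ hσ0.ne']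
    calc ‖Real.exp (-Real.log σ * (t:ℝ)) * Δ t‖
        = Real.exp (-Real.log σ * (t:ℝ)) * |Δ t| := by
          rw [Real.norm_eq_abs, abs_mul, abs_of_pos (Real.exp_pos _)]
      _ ≤ Real.exp (-Real.log σ * (t:ℝ)) * (Cc * ((t:ℝ)+1)^k * ρ^t) :=
          mul_le_mul_of_nonneg_left (hΔ t) (Real.exp_pos _).le
      _ = (Cc/σ) * (((t+1:ℕ):ℝ)^k * σ^(t+1)) := by
          rw [show Real.exp (-Real.log σ * (t:ℝ)) * (Cc * ((t:ℝ)+1)^k * ρ^t)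
            = Cc * ((t:ℝ)+1)^k * (Real.exp (-Real.log σ * (t:ℝ)) * ρ^t) from by ring, hkey]
          push_cast
          rw [pow_succ]
          field_simp
  · funext t
    rw [hu t, hdecomp t]
    rfl
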